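/- Let V be a finite-dimensional real normed space and let v be a smooth point of the unit sphere of V, with support functional σ_v. Then for every y ∈ V, lim_{t→+∞} (‖t·v‖ − ‖t·v − y‖) = σ_v(y). -/

import Mathlib

/-- Proposition 6.2 of Rieffel: if `v` is a smooth point of the unit sphere of a
finite-dimensional real normed space `V`, with (unique) support functional `σ`, then
`φ_y(b_v) = lim_{t→∞} (‖t·v‖ − ‖t·v − y‖) = σ(y)` for every `y ∈ V`. -/
theorem stmt8 {V : Type*} [NormedAddCommGroup V] [NormedSpace ℝ V]
    [FiniteDimensional ℝ V]
    (v : V) (hv : ‖v‖ = 1) (σ : V →L[ℝ] ℝ) (hσnorm : ‖σ‖ = 1) (hσv : σ v = 1)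
    (huniq : ∀ τ : V →L[ℝ] ℝ, ‖τ‖ = 1 → τ v = 1 → τ = σ) :
    ∀ y : V, Filter.Tendsto (fun t : ℝ => ‖t • v‖ - ‖t • v - y‖)
      Filter.atTop (nhds (σ y)) := by
  intro y
  classical
  set τ : ℝ → (V →L[ℝ] ℝ) := fun t =>
    if h : t • v - y = 0 then σ else (exists_dual_vector ℝ (t • v - y) (norm_ne_zero_iff.mpr h)).choose with hτdef
  have hτnorm : ∀ t : ℝ, ‖τ t‖ = 1 := by
    intro t
    by_cases h : t • v - y = 0
    · simp only [hτdef, dif_pos h, hσnorm]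
    · simp only [hτdef, dif_neg h]
      exact (exists_dual_vector ℝ (t • v - y) (norm_ne_zero_iff.mpr h)).choose_spec.1
  have hτval : ∀ t : ℝ, τ t (t • v - y) = ‖t • v - y‖ := by
    intro t
    by_cases h : t • v - y = 0
    · simp [hτdef, dif_pos h, h]
    · simp only [hτdef, dif_neg h]
      exact_mod_cast (exists_dual_vector ℝ (t • v - y) (norm_ne_zero_iff.mpr h)).choose_spec.2
  have hτv_le : ∀ t : ℝ, τ t v ≤ 1 := by
    intro t
    calc τ t v ≤ |τ t v| := le_abs_self _
    _ ≤ ‖τ t‖ * ‖v‖ := (τ t).le_opNorm v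
    _ = 1 := by rw [hτnorm, hv, mul_one]
  have hτy_abs : ∀ t : ℝ, |τ t y| ≤ ‖y‖ := by
    intro t
    calc |τ t y| ≤ ‖τ t‖ * ‖y‖ := (τ t).le_opNorm y
    _ = ‖y‖ := by rw [hτnorm, one_mul]
  have hnormsmul : ∀ t : ℝ, 0 ≤ t → ‖t • v‖ = t := by
    intro t ht
    rw [norm_smul, hv, mul_one, Real.norm_eq_abs, abs_of_nonneg ht]
  -- lower bound on norm of t•v - y
  have hnorm_lb : ∀ t : ℝ, 0 ≤ t → t - ‖y‖ ≤ ‖t • v - y‖ := by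
    intro t ht
    have := norm_sub_norm_le (t • v) y
    rw [hnormsmul t ht] at this
    linarith
  have hnorm_ub : ∀ t : ℝ, 0 ≤ t → ‖t • v - y‖ ≤ t + ‖y‖ := by
    intro t ht
    have := norm_sub_le (t • v) y
    rw [hnormsmul t ht] at this
    linarith
  -- τ t v → 1
  have hτv_lb : ∀ t : ℝ, 1 ≤ t → 1 - 2 * ‖y‖ / t ≤ τ t v := by
    intro t ht
    have ht0 : (0:ℝ) < t := by linarith
    have hval := hτval t
    have hexp : τ t (t • v - y) = t * τ t v - τ t y := by
      rw [map_sub, map_smul]; simp [smul_eq_mul]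
    rw [hexp] at hval
    have h1 : t - ‖y‖ ≤ ‖t • v - y‖ := hnorm_lb t ht0.le
    have h2 : -‖y‖ ≤ τ t y := neg_le_of_abs_le (hτy_abs t)
    have h3 : t - 2 * ‖y‖ ≤ t * τ t v := by linarith
    have h4 : (1 - 2 * ‖y‖ / t) * t ≤ τ t v * t := by
      have he : (1 - 2 * ‖y‖ / t) * t = t - 2 * ‖y‖ := by field_simp
      rw [he]; nlinarith
    exact le_of_mul_le_mul_right h4 ht0
  have hτv_lim : Filter.Tendsto (fun t : ℝ => τ t v) Filter.atTop (nhds 1) := by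
    have hlow : Filter.Tendsto (fun t : ℝ => 1 - 2 * ‖y‖ / t) Filter.atTop (nhds 1) := by
      have : Filter.Tendsto (fun t : ℝ => 2 * ‖y‖ / t) Filter.atTop (nhds 0) :=
        tendsto_const_div_atTop_nhds_zero_nat (2 * ‖y‖) |>.comp tendsto_natCast_atTop_atTop |> fun _ => by
          exact Filter.Tendsto.div_atTop tendsto_const_nhds Filter.tendsto_id
      simpa using (tendsto_const_nhds (α := ℝ)).sub this
    refine tendsto_of_tendsto_of_tendsto_of_le_of_le' hlow tendsto_const_nhds ?_ ?_
    · exact Filter.eventually_atTop.mpr ⟨1, hτv_lb⟩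
    · exact Filter.Eventually.of_forall hτv_le
  -- τ → σ by compactness and uniqueness
  have hτσ : Filter.Tendsto τ Filter.atTop (nhds σ) := by
    apply Filter.tendsto_of_subseq_tendsto
    intro ns hns
    have hball : ∀ n, τ (ns n) ∈ Metric.closedBall (0 : V →L[ℝ] ℝ) 1 := by
      intro n
      simp [Metric.mem_closedBall, dist_zero_right, hτnorm]
    obtain ⟨L, hL, φ, hφ, hconv⟩ :=
      (ProperSpace.isCompact_closedBall (0 : V →L[ℝ] ℝ) 1).tendsto_subseq hball
    refine ⟨φ, ?_⟩
    have hLnorm_le : ‖L‖ ≤ 1 := by simpa [dist_zero_right] using hL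
    have hevalv : Filter.Tendsto (fun n => τ (ns (φ n)) v) Filter.atTop (nhds (L v)) := by
      have hc : Continuous fun g : V →L[ℝ] ℝ => g v := by
        exact (ContinuousLinearMap.apply ℝ ℝ v).continuous
      exact (hc.tendsto L).comp hconv
    have hevalv' : Filter.Tendsto (fun n => τ (ns (φ n)) v) Filter.atTop (nhds 1) :=
      hτv_lim.comp (hns.comp (hφ.tendsto_atTop))
    have hLv : L v = 1 := tendsto_nhds_unique hevalv hevalv'
    have hLnorm : ‖L‖ = 1 := by
      refine le_antisymm hLnorm_le ?_
      have : |L v| ≤ ‖L‖ * ‖v‖ := L.le_opNorm v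
      rw [hLv, hv, mul_one] at this
      simpa using this
    rw [← huniq L hLnorm hLv]
    exact hconv
  have hτy_lim : Filter.Tendsto (fun t : ℝ => τ t y) Filter.atTop (nhds (σ y)) := by
    have hc : Continuous fun g : V →L[ℝ] ℝ => g y := (ContinuousLinearMap.apply ℝ ℝ y).continuous
    exact (hc.tendsto σ).comp hτσ
  -- squeeze
  refine tendsto_of_tendsto_of_tendsto_of_le_of_le' hτy_lim tendsto_const_nhds ?_ ?_
  · filter_upwards [Filter.eventually_ge_atTop (1:ℝ)] with t ht
    have ht0 : (0:ℝ) ≤ t := by linarith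
    have hval := hτval t
    have hexp : τ t (t • v - y) = t * τ t v - τ t y := by
      rw [map_sub, map_smul]; simp [smul_eq_mul]
    rw [hexp] at hval
    have h1 : t * τ t v ≤ t := by
      have := hτv_le t
      nlinarith
    rw [hnormsmul t ht0]
    linarith
  · filter_upwards [Filter.eventually_ge_atTop (0:ℝ)] with t ht
    have h1 : σ (t • v - y) ≤ ‖t • v - y‖ := by
      calc σ (t • v - y) ≤ |σ (t • v - y)| := le_abs_self _
      _ ≤ ‖σ‖ * ‖t • v - y‖ := σ.le_opNorm _
      _ = ‖t • v - y‖ := by rw [hσnorm, one_mul]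
    have h2 : σ (t • v - y) = t - σ y := by
      rw [map_sub, map_smul]; simp [smul_eq_mul, hσv]
    rw [hnormsmul t ht]
    linarith [h1, h2 ▸ h1]
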